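/- Assume (A1)–(A3). Let u ∈ 𝒰 and x ∈ AC([0,1];ℝⁿ) with x(0) ∈ C₀ and x(t) ∈ C for all t. Then x solves (D) with control u if and only if there exists a nonnegative measurable function ξ supported on I⁰(x) such that ẋ(t) = f_Φ(x(t),u(t)) − ξ(t)∇ψ(x(t)) a.e. on [0,1]. In that case ξ is unique, belongs to L^∞([0,1];ℝ⁺), and satisfies: ξ(t) = 0 for t ∈ I⁻(x); ξ(t) = ‖ẋ(t) − f_Φ(x(t),u(t))‖/‖∇ψ(x(t))‖ ∈ [0, M̄/(2η)] for a.e. t ∈ I⁰(x); and ‖ξ‖_∞ ≤ M̄/(2η). -/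

import Mathlib

open MeasureTheory Filter Set Metric Topology
open scoped RealInnerProductSpace

noncomputable section

/-- The proximal normal cone to `S` at `x`. -/
def proxNC {H : Type*} [NormedAddCommGroup H] [InnerProductSpace ℝ H]
    (S : Set H) (x : H) : Set H :=
  {ζ | ∃ σ : ℝ, 0 < σ ∧ ∀ y ∈ S, ⟪ζ, y - x⟫ ≤ σ * ‖y - x‖ ^ 2}

/-- The limiting (Mordukhovich) normal cone to `S` at `x`. -/
def limNC {H : Type*} [NormedAddCommGroup H] [InnerProductSpace ℝ H]
    (S : Set H) (x : H) : Set H :=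
  {ζ | ∃ xs ζs : ℕ → H,
    (∀ i, xs i ∈ S ∧ ζs i ∈ proxNC S (xs i)) ∧
    Tendsto xs atTop (nhds x) ∧ Tendsto ζs atTop (nhds ζ)}

/-- The Clarke normal cone to `S` at `x`. -/
def clarkeNC {H : Type*} [NormedAddCommGroup H] [InnerProductSpace ℝ H]
    (S : Set H) (x : H) : Set H :=
  closure (convexHull ℝ (limNC S x))

/-- `x` is absolutely continuous on `[0,1]` with (a.e.) derivative `x'`. -/
def ACOn {H : Type*} [NormedAddCommGroup H] [NormedSpace ℝ H] [CompleteSpace H]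
    (x x' : ℝ → H) : Prop :=
  IntervalIntegrable x' volume 0 1 ∧
  ∀ t ∈ Set.Icc (0:ℝ) 1, x t = x 0 + ∫ s in (0:ℝ)..t, x' s

/-- `f` is in `L²([0,1])`. -/
def L2On {H : Type*} [NormedAddCommGroup H] (f : ℝ → H) : Prop :=
  MemLp f 2 (volume.restrict (Set.Icc (0:ℝ) 1))

/-- Weak convergence in `L²([0,1])`. -/
def WeakL2 {H : Type*} [NormedAddCommGroup H] [InnerProductSpace ℝ H] [CompleteSpace H]
    (F : ℕ → ℝ → H) (f : ℝ → H) : Prop :=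
  ∀ g : ℝ → H, L2On g →
    Tendsto (fun k => ∫ t in Set.Icc (0:ℝ) 1, ⟪F k t, g t⟫) atTop
      (nhds (∫ t in Set.Icc (0:ℝ) 1, ⟪f t, g t⟫))

/-- Strong convergence in `L²([0,1])`. -/
def StrongL2 {H : Type*} [NormedAddCommGroup H] (F : ℕ → ℝ → H) (f : ℝ → H) : Prop :=
  Tendsto (fun k => ∫ t in Set.Icc (0:ℝ) 1, ‖F k t - f t‖ ^ 2) atTop (nhds 0)

/-- `(x, x')` solves the penalized system `(D_γ)` with control `u` and initial point `c`. -/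
def solDgam {n m : ℕ} (ψ : EuclideanSpace ℝ (Fin n) → ℝ)
    (ψ' : EuclideanSpace ℝ (Fin n) → EuclideanSpace ℝ (Fin n))
    (f : EuclideanSpace ℝ (Fin n) → EuclideanSpace ℝ (Fin m) → EuclideanSpace ℝ (Fin n))
    (Φ' : EuclideanSpace ℝ (Fin n) → EuclideanSpace ℝ (Fin n))
    (γr : ℝ) (u : ℝ → EuclideanSpace ℝ (Fin m)) (c : EuclideanSpace ℝ (Fin n))
    (x x' : ℝ → EuclideanSpace ℝ (Fin n)) : Prop :=
  x 0 = c ∧ ACOn x x' ∧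
  ∀ᵐ t ∂(volume.restrict (Set.Icc (0:ℝ) 1)),
    x' t = f (x t) (u t) - Φ' (x t) - (γr * Real.exp (γr * ψ (x t))) • ψ' (x t)

/-- `(x, x')` solves the sweeping process `(D)` (without the initial condition) with
control `u`: `ẋ ∈ f_Φ(x,u) − N_C(x)` a.e. and `x(t) ∈ C` for all `t`. -/
def solD {n m : ℕ} (ψ : EuclideanSpace ℝ (Fin n) → ℝ)
    (f : EuclideanSpace ℝ (Fin n) → EuclideanSpace ℝ (Fin m) → EuclideanSpace ℝ (Fin n))
    (Φ' : EuclideanSpace ℝ (Fin n) → EuclideanSpace ℝ (Fin n))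
    (u : ℝ → EuclideanSpace ℝ (Fin m)) (x x' : ℝ → EuclideanSpace ℝ (Fin n)) : Prop :=
  ACOn x x' ∧ (∀ t ∈ Set.Icc (0:ℝ) 1, ψ (x t) ≤ 0) ∧
  ∀ᵐ t ∂(volume.restrict (Set.Icc (0:ℝ) 1)),
    f (x t) (u t) - Φ' (x t) - x' t ∈ clarkeNC {y : EuclideanSpace ℝ (Fin n) | ψ y ≤ 0} (x t)

/-- `u` is a measurable control: `u ∈ 𝒰`. -/
def ctrlMeas {m : ℕ} (U : ℝ → Set (EuclideanSpace ℝ (Fin m)))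
    (u : ℝ → EuclideanSpace ℝ (Fin m)) : Prop :=
  Measurable u ∧ ∀ᵐ t ∂(volume.restrict (Set.Icc (0:ℝ) 1)), u t ∈ U t

/-- `u` is a `W^{1,2}` control with derivative `u'`: `u ∈ 𝒲`. -/
def ctrlW12 {m : ℕ} (U : ℝ → Set (EuclideanSpace ℝ (Fin m)))
    (u u' : ℝ → EuclideanSpace ℝ (Fin m)) : Prop :=
  ACOn u u' ∧ L2On u' ∧ ∀ t ∈ Set.Icc (0:ℝ) 1, u t ∈ U t

/-- The multiplier property: `ξ` is a nonnegative measurable function supported on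
`I⁰(x) = {t : x(t) ∈ bdry C}` such that `ẋ = f_Φ(x,u) − ξ ∇ψ(x)` a.e. on `[0,1]`. -/
def multP {n m : ℕ} (ψ : EuclideanSpace ℝ (Fin n) → ℝ)
    (ψ' : EuclideanSpace ℝ (Fin n) → EuclideanSpace ℝ (Fin n))
    (f : EuclideanSpace ℝ (Fin n) → EuclideanSpace ℝ (Fin m) → EuclideanSpace ℝ (Fin n))
    (Φ' : EuclideanSpace ℝ (Fin n) → EuclideanSpace ℝ (Fin n))
    (u : ℝ → EuclideanSpace ℝ (Fin m)) (x x' : ℝ → EuclideanSpace ℝ (Fin n))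
    (ξ : ℝ → ℝ) : Prop :=
  Measurable ξ ∧ (∀ t ∈ Set.Icc (0:ℝ) 1, 0 ≤ ξ t) ∧
  (∀ t ∈ Set.Icc (0:ℝ) 1,
    x t ∉ frontier {y : EuclideanSpace ℝ (Fin n) | ψ y ≤ 0} → ξ t = 0) ∧
  ∀ᵐ t ∂(volume.restrict (Set.Icc (0:ℝ) 1)),
    x' t = f (x t) (u t) - Φ' (x t) - ξ t • ψ' (x t)

section MyAux

variable {H : Type*} [NormedAddCommGroup H] [InnerProductSpace ℝ H]

lemma my_zero_mem_proxNC (S : Set H) (x : H) : (0:H) ∈ proxNC S x :=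
  ⟨1, one_pos, fun y _ => by rw [inner_zero_left]; positivity⟩

lemma my_mem_limNC_of_proxNC {S : Set H} {x ζ : H} (hx : x ∈ S) (h : ζ ∈ proxNC S x) :
    ζ ∈ limNC S x :=
  ⟨fun _ => x, fun _ => ζ, fun _ => ⟨hx, h⟩, tendsto_const_nhds, tendsto_const_nhds⟩

lemma my_limNC_subset_clarkeNC (S : Set H) (x : H) : limNC S x ⊆ clarkeNC S x :=
  (subset_convexHull ℝ _).trans subset_closure

lemma my_zero_mem_clarkeNC {S : Set H} {x : H} (hx : x ∈ S) : (0:H) ∈ clarkeNC S x :=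
  my_limNC_subset_clarkeNC S x (my_mem_limNC_of_proxNC hx (my_zero_mem_proxNC S x))

lemma my_proxNC_interior {S : Set H} {x : H} (hx : x ∈ interior S) : proxNC S x ⊆ {0} := by
  rintro ζ ⟨σ, hσ, hζ⟩
  by_contra hne
  simp only [mem_singleton_iff] at hne
  obtain ⟨ε, hε, hball⟩ := Metric.isOpen_iff.1 isOpen_interior x hx
  have hζ0 : 0 < ‖ζ‖ := norm_pos_iff.2 hne
  set t : ℝ := min (ε / (2 * ‖ζ‖)) (1 / (2 * σ)) with ht
  have ht1 : 0 < t := lt_min (by positivity) (by positivity)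
  have h7 : t * ‖ζ‖ ≤ ε / 2 := by
    have h8 : t ≤ ε / (2 * ‖ζ‖) := min_le_left _ _
    have h9 : ε / (2 * ‖ζ‖) * ‖ζ‖ = ε / 2 := by field_simp
    nlinarith
  have hy : x + t • ζ ∈ S := by
    apply interior_subset; apply hball
    simp only [mem_ball, dist_self_add_left, norm_smul, Real.norm_eq_abs, abs_of_pos ht1]
    linarith
  have := hζ _ hy
  simp only [add_sub_cancel_left, inner_smul_right, norm_smul, Real.norm_eq_abs,
    abs_of_pos ht1, real_inner_self_eq_norm_sq] at this
  have h3 : 1 ≤ σ * t := by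
    have hpos : 0 < t * ‖ζ‖ ^ 2 := by positivity
    nlinarith [this]
  have h4 : σ * t ≤ 1 / 2 := by
    have h5 : σ * t ≤ σ * (1 / (2 * σ)) := mul_le_mul_of_nonneg_left (min_le_right _ _) hσ.le
    have h6 : σ * (1 / (2 * σ)) = 1 / 2 := by field_simp
    linarith
  linarith

def myray (g : H) : Set H := {ζ | ∃ l : ℝ, 0 ≤ l ∧ ζ = l • g}

lemma my_ray_eq {g : H} (hg : g ≠ 0) :
    myray g = {ζ | 0 ≤ ⟪g, ζ⟫ ∧ (‖g‖:ℝ) ^ 2 • ζ = ⟪g, ζ⟫ • g} := by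
  ext ζ
  constructor
  · rintro ⟨l, hl, rfl⟩
    constructor
    · rw [real_inner_smul_right, real_inner_self_eq_norm_sq]; positivity
    · rw [real_inner_smul_right, real_inner_self_eq_norm_sq, mul_comm, smul_smul]
  · rintro ⟨h1, h2⟩
    have hgn : (‖g‖:ℝ) ^ 2 ≠ 0 := pow_ne_zero 2 (norm_ne_zero_iff.2 hg)
    refine ⟨⟪g, ζ⟫ / ‖g‖ ^ 2, div_nonneg h1 (by positivity), ?_⟩
    rw [div_eq_mul_inv, mul_comm, ← smul_smul, ← h2, smul_smul, inv_mul_cancel₀ hgn, one_smul]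

lemma my_convex_ray (g : H) : Convex ℝ (myray g) := by
  rintro a ⟨l₁, hl₁, rfl⟩ b ⟨l₂, hl₂, rfl⟩ s t hs ht hst
  exact ⟨s * l₁ + t * l₂, by positivity, by simp [add_smul, smul_smul]⟩

lemma my_isClosed_ray (g : H) : IsClosed (myray g) := by
  rcases eq_or_ne g 0 with rfl | hg
  · have : myray (0:H) = {0} := by
      ext ζ
      constructor
      · rintro ⟨l, _, rfl⟩; simp
      · rintro rfl; exact ⟨0, le_rfl, by simp⟩
    rw [this]; exact isClosed_singleton
  · rw [my_ray_eq hg]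
    have h1 : IsClosed {ζ : H | 0 ≤ ⟪g, ζ⟫} :=
      isClosed_le continuous_const (continuous_const.inner continuous_id)
    have h2 : IsClosed {ζ : H | (‖g‖:ℝ) ^ 2 • ζ = ⟪g, ζ⟫ • g} :=
      isClosed_eq (continuous_const.smul continuous_id)
        ((continuous_const.inner continuous_id).smul continuous_const)
    exact h1.inter h2

lemma my_limNC_interior {S : Set H} {x : H} (hx : x ∈ interior S) : limNC S x ⊆ {0} := by
  rintro ζ ⟨xs, ζs, hmem, hxs, hζs⟩
  have hev : ∀ᶠ i in atTop, xs i ∈ interior S := hxs.eventually_mem (isOpen_interior.mem_nhds hx)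
  have hz : ∀ᶠ i in atTop, ζs i = 0 := hev.mono fun i hi => my_proxNC_interior hi (hmem i).2
  have : Tendsto ζs atTop (𝓝 (0:H)) := tendsto_const_nhds.congr' (hz.mono fun i h => h.symm)
  exact tendsto_nhds_unique hζs this

lemma my_clarkeNC_interior {S : Set H} {x : H} (hx : x ∈ interior S) : clarkeNC S x = {0} := by
  have h1 : limNC S x = {0} :=
    le_antisymm (my_limNC_interior hx)
      (by rintro ζ rfl; exact my_mem_limNC_of_proxNC (interior_subset hx) (my_zero_mem_proxNC S x))
  rw [clarkeNC, h1, convexHull_singleton, closure_singleton]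

lemma my_proxNC_subset_ray [CompleteSpace H] {ψ : H → ℝ} {g : H} {x : H} (hgrad : HasGradientAt ψ g x)
    (hx : ψ x = 0) (hg : g ≠ 0) : proxNC {y : H | ψ y ≤ 0} x ⊆ myray g := by
  rintro ζ ⟨σ, hσ, hζ⟩
  have hgpos : (0:ℝ) < ‖g‖ := norm_pos_iff.2 hg
  have key : ∀ v : H, ⟪g, v⟫ < 0 → ⟪ζ, v⟫ ≤ 0 := by
    intro v hv
    have hc : HasDerivAt (fun t : ℝ => x + t • v) v 0 := by
      simpa using ((hasDerivAt_id (0:ℝ)).smul_const v).const_add x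
    have hφ : HasDerivAt (fun t : ℝ => ψ (x + t • v)) ⟪g, v⟫ 0 := by
      have h0 : (fun t : ℝ => x + t • v) 0 = x := by simp
      have hF : HasFDerivAt ψ ((InnerProductSpace.toDual ℝ H) g)
          ((fun t : ℝ => x + t • v) 0) := by simpa using hgrad.hasFDerivAt
      have := hF.comp_hasDerivAt (0:ℝ) hc
      simp [InnerProductSpace.toDual_apply_apply] at this
      exact this
    have hslope := hasDerivAt_iff_tendsto_slope.1 hφ
    have hneg : ∀ᶠ t in 𝓝[>] (0:ℝ), slope (fun t : ℝ => ψ (x + t • v)) 0 t < 0 := by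
      have : ∀ᶠ w in 𝓝 ⟪g, v⟫, w < 0 := eventually_lt_nhds hv
      exact nhdsWithin_mono 0 (fun t (ht : (0:ℝ) < t) => ne_of_gt ht) (hslope.eventually this)
    have hev : ∀ᶠ t in 𝓝[>] (0:ℝ), ⟪ζ, v⟫ ≤ σ * t * ‖v‖ ^ 2 := by
      filter_upwards [hneg, self_mem_nhdsWithin] with t hst (htpos : (0:ℝ) < t)
      have hmem : x + t • v ∈ {y : H | ψ y ≤ 0} := by
        have hs : slope (fun t : ℝ => ψ (x + t • v)) 0 t
            = ψ (x + t • v) / t := by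
          simp [slope, hx, div_eq_inv_mul]
        rw [hs] at hst
        have := mul_neg_of_pos_of_neg htpos hst
        rw [mul_div_cancel₀ _ (ne_of_gt htpos)] at this
        exact le_of_lt this
      have h2 := hζ _ hmem
      simp only [add_sub_cancel_left, inner_smul_right, norm_smul, Real.norm_eq_abs,
        abs_of_pos htpos, mul_pow] at h2
      have h3 : t * ⟪ζ, v⟫ ≤ t * (σ * t * ‖v‖ ^ 2) := by nlinarith [h2]
      exact le_of_mul_le_mul_left h3 htpos
    have htend : Tendsto (fun t : ℝ => σ * t * ‖v‖ ^ 2) (𝓝[>] (0:ℝ)) (𝓝 0) := by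
      have hcont : Continuous fun t : ℝ => σ * t * ‖v‖ ^ 2 := by continuity
      have : Tendsto (fun t : ℝ => σ * t * ‖v‖ ^ 2) (𝓝 (0:ℝ)) (𝓝 (σ * 0 * ‖v‖ ^ 2)) :=
        hcont.tendsto 0
      simpa using this.mono_left nhdsWithin_le_nhds
    exact ge_of_tendsto htend hev
  have weak : ∀ v : H, ⟪g, v⟫ ≤ 0 → ⟪ζ, v⟫ ≤ 0 := by
    intro v hv
    have hev : ∀ ε : ℝ, 0 < ε → ⟪ζ, v⟫ ≤ ε * ⟪ζ, g⟫ := by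
      intro ε hε
      have h1 : ⟪g, v - ε • g⟫ < 0 := by
        rw [inner_sub_right, real_inner_smul_right, real_inner_self_eq_norm_sq]
        nlinarith [mul_pos hε (pow_pos hgpos 2)]
      have h2 := key _ h1
      rw [inner_sub_right, real_inner_smul_right] at h2
      linarith
    have htend : Tendsto (fun ε : ℝ => ε * ⟪ζ, g⟫) (𝓝[>] (0:ℝ)) (𝓝 0) := by
      have hcont : Continuous fun ε : ℝ => ε * ⟪ζ, g⟫ := by continuity
      have : Tendsto (fun ε : ℝ => ε * ⟪ζ, g⟫) (𝓝 (0:ℝ)) (𝓝 (0 * ⟪ζ, g⟫)) := hcont.tendsto 0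
      simpa using this.mono_left nhdsWithin_le_nhds
    exact ge_of_tendsto htend
      (eventually_nhdsWithin_of_forall (fun ε (hε : (0:ℝ) < ε) => hev ε hε))
  set l : ℝ := ⟪g, ζ⟫ / ‖g‖ ^ 2 with hl
  have hgn : (‖g‖:ℝ) ^ 2 ≠ 0 := pow_ne_zero 2 (ne_of_gt hgpos)
  have hw : ⟪g, ζ - l • g⟫ = 0 := by
    rw [inner_sub_right, real_inner_smul_right, real_inner_self_eq_norm_sq, hl]
    field_simp
    ring
  have hw2 : ⟪ζ, ζ - l • g⟫ ≤ 0 := weak _ (le_of_eq hw)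
  have hw3 : ζ - l • g = 0 := by
    have : ⟪ζ - l • g, ζ - l • g⟫ ≤ 0 := by
      have h4 : ⟪l • g, ζ - l • g⟫ = 0 := by
        rw [real_inner_smul_left, hw, mul_zero]
      calc ⟪ζ - l • g, ζ - l • g⟫ = ⟪ζ, ζ - l • g⟫ - ⟪l • g, ζ - l • g⟫ := by
            rw [inner_sub_left]
        _ ≤ 0 := by rw [h4]; linarith
    have := real_inner_self_nonneg (x := ζ - l • g)
    have h5 : ⟪ζ - l • g, ζ - l • g⟫ = 0 := le_antisymm ‹_› ‹_›
    exact inner_self_eq_zero.1 h5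
  have hlnn : 0 ≤ l := by
    have h6 : ⟪ζ, -g⟫ ≤ 0 := weak _ (by rw [inner_neg_right]; exact neg_nonpos.2 real_inner_self_nonneg)
    rw [inner_neg_right] at h6
    have h7 : 0 ≤ ⟪g, ζ⟫ := by rw [real_inner_comm]; linarith
    exact div_nonneg h7 (by positivity)
  exact ⟨l, hlnn, by rw [← sub_eq_zero]; exact hw3⟩

lemma my_ray_subset_proxNC [CompleteSpace H] {ψ : H → ℝ} {ψ' : H → H} {x : H} {r : ℝ}
    (hr : 0 < r) (hd : ∀ y ∈ ball x r, HasGradientAt ψ (ψ' y) y) {K' : NNReal}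
    (hlip : LipschitzOnWith K' ψ' (ball x r)) (hx : ψ x = 0) :
    myray (ψ' x) ⊆ proxNC {y : H | ψ y ≤ 0} x := by
  set g := ψ' x with hgdef
  set τ : ℝ := max (K':ℝ) (2 * ‖g‖ / r) with hτ
  have hτnn : 0 ≤ τ := le_trans K'.2 (le_max_left _ _)
  have core : ∀ y, ψ y ≤ 0 → ⟪g, y - x⟫ ≤ τ * ‖y - x‖ ^ 2 := by
    intro y hy
    rcases lt_or_ge ‖y - x‖ (r / 2) with hnear | hfar
    · -- MVT estimate on closedBall x ‖y - x‖
      set s : Set H := closedBall x ‖y - x‖ with hs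
      have hsub : s ⊆ ball x r := closedBall_subset_ball (by linarith)
      have hxs : x ∈ s := mem_closedBall_self (norm_nonneg _)
      have hys : y ∈ s := by
        simp [hs, mem_closedBall, dist_eq_norm]
      set F : H → ℝ := fun z => ψ z - ⟪g, z⟫ with hF
      have hder : ∀ z ∈ s, HasFDerivWithinAt F
          ((InnerProductSpace.toDual ℝ H) (ψ' z - g)) s z := by
        intro z hz
        have h1 : HasFDerivAt ψ ((InnerProductSpace.toDual ℝ H) (ψ' z)) z :=
          (hd z (hsub hz)).hasFDerivAt
        have h2 : HasFDerivAt (fun w : H => ⟪g, w⟫)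
            ((InnerProductSpace.toDual ℝ H) g) z :=
          ((InnerProductSpace.toDual ℝ H) g).hasFDerivAt
        have := (h1.sub h2).hasFDerivWithinAt (s := s)
        rwa [← map_sub] at this
      have hbound : ∀ z ∈ s, ‖(InnerProductSpace.toDual ℝ H) (ψ' z - g)‖ ≤ (K':ℝ) * ‖y - x‖ := by
        intro z hz
        rw [LinearIsometryEquiv.norm_map]
        calc ‖ψ' z - g‖ ≤ (K':ℝ) * dist z x :=
              by simpa [dist_eq_norm] using hlip.norm_sub_le (hsub hz) (mem_ball_self hr)
          _ ≤ (K':ℝ) * ‖y - x‖ := by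
              apply mul_le_mul_of_nonneg_left _ K'.2
              exact hz
      have hmvt := (convex_closedBall x ‖y - x‖).norm_image_sub_le_of_norm_hasFDerivWithin_le
        hder hbound hxs hys
      have heq : F y - F x = ψ y - ⟪g, y - x⟫ := by
        simp only [hF, hx, inner_sub_right]; ring
      have habs : |ψ y - ⟪g, y - x⟫| ≤ (K':ℝ) * ‖y - x‖ * ‖y - x‖ := by
        rw [← heq]; exact hmvt
      have h3 := (abs_le.1 habs).1
      have h4 : ⟪g, y - x⟫ ≤ ψ y + (K':ℝ) * ‖y - x‖ ^ 2 := by nlinarith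
      calc ⟪g, y - x⟫ ≤ (K':ℝ) * ‖y - x‖ ^ 2 := by nlinarith
        _ ≤ τ * ‖y - x‖ ^ 2 := by
            apply mul_le_mul_of_nonneg_right (le_max_left _ _) (sq_nonneg _)
    · calc ⟪g, y - x⟫ ≤ ‖g‖ * ‖y - x‖ := real_inner_le_norm g (y - x)
        _ ≤ (2 * ‖g‖ / r) * ‖y - x‖ ^ 2 := by
            rcases eq_or_lt_of_le (norm_nonneg (y - x)) with h0 | h0
            · rw [← h0]; simp
            · rw [div_mul_eq_mul_div, le_div_iff₀ hr, pow_two]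
              nlinarith [mul_le_mul_of_nonneg_left hfar
                (mul_nonneg (mul_nonneg (by norm_num : (0:ℝ) ≤ 2) (norm_nonneg g)) h0.le)]
        _ ≤ τ * ‖y - x‖ ^ 2 := by
            apply mul_le_mul_of_nonneg_right (le_max_right _ _) (sq_nonneg _)
  rintro ζ ⟨l, hl, rfl⟩
  refine ⟨l * τ + 1, by positivity, fun y hy => ?_⟩
  have := core y hy
  rw [real_inner_smul_left]
  nlinarith [sq_nonneg ‖y - x‖, mul_le_mul_of_nonneg_left this hl]

lemma my_mem_interior_of_neg {ψ : H → ℝ} {V : Set H} (hV : IsOpen V)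
    (hcont : ∀ y ∈ V, ContinuousAt ψ y) {y : H} (hyV : y ∈ V) (hy : ψ y < 0) :
    y ∈ interior {z : H | ψ z ≤ 0} := by
  have : {z ∈ V | ψ z < 0} ∈ 𝓝 y := by
    have h1 : V ∈ 𝓝 y := hV.mem_nhds hyV
    have h2 : {z : H | ψ z < 0} ∈ 𝓝 y := by
      have := (hcont y hyV).preimage_mem_nhds (Iio_mem_nhds hy)
      exact this
    exact inter_mem h1 h2
  exact mem_interior_iff_mem_nhds.2 (mem_of_superset this (fun z hz => le_of_lt hz.2))

lemma my_limNC_subset_ray [CompleteSpace H] {ψ : H → ℝ} {ψ' : H → H} {V : Set H} (hV : IsOpen V)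
    (hd : ∀ y ∈ V, HasGradientAt ψ (ψ' y) y) (hc : ContinuousOn ψ' V)
    (hSV : {y : H | ψ y ≤ 0} ⊆ V) (hnz : ∀ y, ψ y = 0 → ψ' y ≠ 0)
    {x : H} (hψx : ψ x = 0) :
    limNC {y : H | ψ y ≤ 0} x ⊆ myray (ψ' x) := by
  set S : Set H := {y : H | ψ y ≤ 0} with hS
  have hxS : x ∈ S := le_of_eq hψx
  have hxV : x ∈ V := hSV hxS
  set g : H := ψ' x with hgdef
  have hg : g ≠ 0 := hnz x hψx
  rintro ζ ⟨xs, ζs, hmem, hxs, hζs⟩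
  have hray : ∀ i, ∃ l : ℝ, 0 ≤ l ∧ ζs i = l • ψ' (xs i) := by
    intro i
    have hle : ψ (xs i) ≤ 0 := (hmem i).1
    rcases eq_or_lt_of_le hle with hψi | hψi
    · have hψi' : ψ (xs i) = 0 := hψi
      have := my_proxNC_subset_ray (hd _ (hSV (hmem i).1)) hψi' (hnz _ hψi') (hmem i).2
      exact this
    · have hin : xs i ∈ interior S :=
        my_mem_interior_of_neg hV (fun y hy => (hd y hy).hasFDerivAt.continuousAt)
          (hSV (hmem i).1) hψi
      have := my_proxNC_interior hin (hmem i).2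
      exact ⟨0, le_rfl, by simp [mem_singleton_iff.1 this]⟩
  choose ls hlnn2 hleq2 using hray
  have hcx : Tendsto (fun i => ψ' (xs i)) atTop (𝓝 g) :=
    ((hc.continuousAt (hV.mem_nhds hxV)).tendsto).comp hxs
  have hgn : (‖g‖:ℝ) ^ 2 ≠ 0 := pow_ne_zero 2 (norm_ne_zero_iff.2 hg)
  set Λ : ℝ := ⟪g, ζ⟫ / ‖g‖ ^ 2 with hΛ
  have hnum : Tendsto (fun i => ⟪ψ' (xs i), ζs i⟫) atTop (𝓝 ⟪g, ζ⟫) := hcx.inner hζs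
  have hden : Tendsto (fun i => ‖ψ' (xs i)‖ ^ 2) atTop (𝓝 (‖g‖ ^ 2)) :=
    (hcx.norm).pow 2
  have hμ : Tendsto (fun i => ⟪ψ' (xs i), ζs i⟫ / ‖ψ' (xs i)‖ ^ 2) atTop (𝓝 Λ) :=
    hnum.div hden hgn
  have hevne : ∀ᶠ i in atTop, ψ' (xs i) ≠ 0 := by
    have : ∀ᶠ i in atTop, ψ' (xs i) ∈ {w : H | w ≠ 0} :=
      hcx.eventually_mem ((isOpen_compl_singleton).mem_nhds hg)
    exact this
  have heq' : ∀ᶠ i in atTop, ⟪ψ' (xs i), ζs i⟫ / ‖ψ' (xs i)‖ ^ 2 = ls i := by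
    filter_upwards [hevne] with i hi
    rw [hleq2 i, real_inner_smul_right, real_inner_self_eq_norm_sq, mul_div_assoc,
      div_self (pow_ne_zero 2 (norm_ne_zero_iff.2 hi)), mul_one]
  have hltend : Tendsto ls atTop (𝓝 Λ) := hμ.congr' heq'
  have hΛnn : 0 ≤ Λ := ge_of_tendsto hltend (Eventually.of_forall hlnn2)
  have hζΛ : Tendsto ζs atTop (𝓝 (Λ • g)) := by
    have := hltend.smul hcx
    exact this.congr (fun i => (hleq2 i).symm)
  exact ⟨Λ, hΛnn, tendsto_nhds_unique hζs hζΛ⟩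

lemma my_ae_hasDerivAt_primitive {E : Type*} [NormedAddCommGroup E] [NormedSpace ℝ E]
    [CompleteSpace E] {w : ℝ → E} (hw : Integrable w (volume : Measure ℝ)) (c : E) :
    ∀ᵐ t ∂(volume : Measure ℝ),
      HasDerivAt (fun s => c + ∫ σ in (0:ℝ)..s, w σ) (w t) t := by
  have hloc : LocallyIntegrable w volume := hw.locallyIntegrable
  filter_upwards [IsUnifLocDoublingMeasure.ae_tendsto_average_norm_sub volume hloc 1] with t ht
  set F : ℝ → E := fun s => c + ∫ σ in (0:ℝ)..s, w σ with hF
  rw [hasDerivAt_iff_tendsto_slope]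
  have hA : Tendsto (fun s : ℝ => ⨍ σ in closedBall t |s - t|, ‖w σ - w t‖)
      (𝓝[≠] t) (𝓝 0) := by
    apply ht (fun _ => t) (fun s => |s - t|)
    · rw [tendsto_nhdsWithin_iff]
      constructor
      · have hcont : Continuous fun s : ℝ => |s - t| := by continuity
        have : Tendsto (fun s : ℝ => |s - t|) (𝓝 t) (𝓝 0) := by simpa using hcont.tendsto t
        exact this.mono_left nhdsWithin_le_nhds
      · exact eventually_mem_nhdsWithin.mono fun s (hs : s ≠ t) =>
          abs_pos.2 (sub_ne_zero.2 hs)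
    · exact Eventually.of_forall fun s => by
        simp [mem_closedBall, dist_self]
  have hbound : ∀ᶠ s in 𝓝[≠] t, ‖slope F t s - w t‖ ≤
      2 * ⨍ σ in closedBall t |s - t|, ‖w σ - w t‖ := by
    filter_upwards [eventually_mem_nhdsWithin] with s (hs : s ≠ t)
    have hst : s - t ≠ 0 := sub_ne_zero.2 hs
    have habs : (0:ℝ) < |s - t| := abs_pos.2 hst
    have hFdiff : F s - F t = ∫ σ in t..s, w σ := by
      simp only [hF, add_sub_add_left_eq_sub]
      exact intervalIntegral.integral_interval_sub_left hw.intervalIntegrable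
        hw.intervalIntegrable
    have hslope : slope F t s - w t = (s - t)⁻¹ • (∫ σ in t..s, (w σ - w t)) := by
      rw [intervalIntegral.integral_sub hw.intervalIntegrable
        intervalIntegrable_const,
        intervalIntegral.integral_const, slope_def_module,
        hFdiff, smul_sub, smul_smul, inv_mul_cancel₀ hst, one_smul]
    rw [hslope, norm_smul, norm_inv, Real.norm_eq_abs]
    have hsub : Set.uIoc t s ⊆ closedBall t |s - t| := by
      intro σ hσ
      rw [mem_closedBall, Real.dist_eq]
      rcases le_total t s with h | h
      · rw [uIoc_of_le h] at hσ
        rw [abs_of_nonneg (by linarith [hσ.1.le] : (0:ℝ) ≤ σ - t),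
          abs_of_nonneg (by linarith : (0:ℝ) ≤ s - t)]
        linarith [hσ.2]
      · rw [uIoc_of_ge h] at hσ
        rw [abs_of_nonpos (by linarith [hσ.2] : σ - t ≤ 0),
          abs_of_nonpos (by linarith : s - t ≤ 0)]
        linarith [hσ.1]
    have hint : IntegrableOn (fun σ => ‖w σ - w t‖) (closedBall t |s - t|) volume :=
      (hw.integrableOn.sub (integrableOn_const measure_closedBall_lt_top.ne)).norm
    have h1 : ‖∫ σ in t..s, (w σ - w t)‖ ≤ ∫ σ in Set.uIoc t s, ‖w σ - w t‖ :=
      intervalIntegral.norm_integral_le_integral_norm_uIoc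
    have h2 : ∫ σ in Set.uIoc t s, ‖w σ - w t‖ ≤ ∫ σ in closedBall t |s - t|, ‖w σ - w t‖ := by
      apply setIntegral_mono_set hint
        (Eventually.of_forall fun σ => norm_nonneg _)
        (HasSubset.Subset.eventuallyLE hsub)
    have h3 : ∫ σ in closedBall t |s - t|, ‖w σ - w t‖
        = (2 * |s - t|) * ⨍ σ in closedBall t |s - t|, ‖w σ - w t‖ := by
      rw [setAverage_eq, smul_eq_mul, Real.volume_real_closedBall
        (by positivity), ← mul_assoc, mul_inv_cancel₀ (by positivity), one_mul]
    calc |s - t|⁻¹ * ‖∫ σ in t..s, (w σ - w t)‖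
        ≤ |s - t|⁻¹ * ((2 * |s - t|) * ⨍ σ in closedBall t |s - t|, ‖w σ - w t‖) := by
          apply mul_le_mul_of_nonneg_left _ (by positivity)
          rw [← h3]; exact h1.trans h2
      _ = 2 * ⨍ σ in closedBall t |s - t|, ‖w σ - w t‖ := by
          field_simp
  have h2A : Tendsto (fun s : ℝ => 2 * ⨍ σ in closedBall t |s - t|, ‖w σ - w t‖)
      (𝓝[≠] t) (𝓝 0) := by
    simpa using hA.const_mul 2
  rw [tendsto_iff_norm_sub_tendsto_zero]
  exact squeeze_zero' (Eventually.of_forall fun s => norm_nonneg _) hbound h2A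

lemma my_level_deriv_zero {F : ℝ → ℝ} {E : Set ℝ} (hE : MeasurableSet E)
    (h0 : ∀ t ∈ E, F t = 0) :
    ∀ᵐ t ∂((volume : Measure ℝ).restrict E), ∀ d, HasDerivAt F d t → d = 0 := by
  filter_upwards [Besicovitch.ae_tendsto_measure_inter_div volume E, ae_restrict_mem hE]
    with t htd htE d hd
  have hne : (𝓝[E \ {t}] t).NeBot := by
    rw [← mem_closure_iff_nhdsWithin_neBot]
    by_contra hcl
    rw [Metric.mem_closure_iff] at hcl
    push_neg at hcl
    obtain ⟨ε, hε, hsep⟩ := hcl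
    have hev : ∀ᶠ r in 𝓝[>] (0:ℝ),
        volume (E ∩ closedBall t r) / volume (closedBall t r) = 0 := by
      filter_upwards [Ioo_mem_nhdsGT_of_mem (left_mem_Ico.2 (half_pos hε))]
        with r hr
      have hsub : E ∩ closedBall t r ⊆ {t} := by
        rintro b ⟨hbE, hbB⟩
        by_contra hbt
        have := hsep b ⟨hbE, hbt⟩
        rw [mem_closedBall, dist_comm] at hbB
        have : dist t b ≤ r := hbB
        linarith [hr.2, hsep b ⟨hbE, hbt⟩]
      have : volume (E ∩ closedBall t r) = 0 :=
        le_antisymm (le_trans (measure_mono hsub) (by simp)) zero_le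
      rw [this, ENNReal.zero_div]
    have := tendsto_nhds_unique htd (tendsto_const_nhds.congr'
      (hev.mono fun r hr => hr.symm))
    exact one_ne_zero this
  have hsl : Tendsto (slope F t) (𝓝[E \ {t}] t) (𝓝 d) :=
    (hasDerivAt_iff_tendsto_slope.1 hd).mono_left
      (nhdsWithin_mono t (fun s hs => hs.2))
  have hzero : slope F t =ᶠ[𝓝[E \ {t}] t] fun _ => 0 := by
    filter_upwards [eventually_mem_nhdsWithin] with s hs
    rw [slope_def_field, h0 s hs.1, h0 t htE]
    simp
  exact tendsto_nhds_unique (hsl.congr' hzero) tendsto_const_nhds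

lemma my_coord_le_norm {n : ℕ} (v : EuclideanSpace ℝ (Fin n)) (i : Fin n) : |v i| ≤ ‖v‖ := by
  rw [EuclideanSpace.norm_eq]
  have h1 : ‖v i‖ ^ 2 ≤ ∑ j, ‖v j‖ ^ 2 :=
    Finset.single_le_sum (f := fun j => ‖v j‖ ^ 2) (fun j _ => sq_nonneg _) (Finset.mem_univ i)
  calc |v i| = Real.sqrt (‖v i‖ ^ 2) := by
        rw [Real.sqrt_sq_eq_abs, Real.norm_eq_abs, abs_abs]
    _ ≤ Real.sqrt (∑ j, ‖v j‖ ^ 2) := Real.sqrt_le_sqrt h1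

lemma my_lipschitz_extend {α : Type*} [PseudoMetricSpace α] {n : ℕ}
    {f : α → EuclideanSpace ℝ (Fin n)} {s : Set α} {Kf : NNReal}
    (hf : LipschitzOnWith Kf f s) :
    ∃ F : α → EuclideanSpace ℝ (Fin n), Continuous F ∧ EqOn (fun p => f p) F s := by
  have hcoord : ∀ i : Fin n, ∃ g : α → ℝ, LipschitzWith Kf g ∧ EqOn (fun a => f a i) g s := by
    intro i
    have hi : LipschitzOnWith Kf (fun a => f a i) s := by
      apply LipschitzOnWith.of_dist_le_mul
      intro a ha b hb
      have h1 := hf.dist_le_mul a ha b hb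
      have h2 : dist (f a i) (f b i) ≤ dist (f a) (f b) := by
        rw [dist_eq_norm, dist_eq_norm]
        have h3 := my_coord_le_norm (f a - f b) i
        have h4 : (f a - f b) i = f a i - f b i := rfl
        rw [h4] at h3
        simpa using h3
      linarith
    exact hi.extend_real
  choose g hg hgeq using hcoord
  refine ⟨fun a => (WithLp.equiv 2 _).symm (fun i => g i a), ?_, ?_⟩
  · apply Continuous.comp
    · exact (PiLp.continuous_toLp (p := 2) (β := fun _ : Fin n => ℝ))
    · exact continuous_pi fun i => (hg i).continuous
  · intro a ha
    ext i
    exact hgeq i ha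

end MyAux

/-- Characterization of the solutions of `(D)`: `x` solves `(D)` with
control `u` iff there is a nonnegative measurable multiplier `ξ` supported on `I⁰(x)` with
`ẋ = f_Φ(x,u) − ξ∇ψ(x)` a.e.; such a `ξ` is unique, essentially bounded by `M̄/(2η)`, and on
`I⁰(x)` it is given a.e. by `‖ẋ − f_Φ(x,u)‖/‖∇ψ(x)‖ ∈ [0, M̄/(2η)]`. -/
theorem stmt_8 {n m : ℕ}
    (ψ : EuclideanSpace ℝ (Fin n) → ℝ)
    (ψ' : EuclideanSpace ℝ (Fin n) → EuclideanSpace ℝ (Fin n))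
    (ρ η : ℝ) (hρ : 0 < ρ) (hη : 0 < η)
    -- (A2.1): ψ is C¹ with locally Lipschitz gradient on C + ρB
    (hψd : ∀ x ∈ Metric.thickening ρ {x : EuclideanSpace ℝ (Fin n) | ψ x ≤ 0},
      HasGradientAt ψ (ψ' x) x)
    (hψc : ContinuousOn ψ' (Metric.thickening ρ {x : EuclideanSpace ℝ (Fin n) | ψ x ≤ 0}))
    (hψloclip : ∀ x ∈ Metric.thickening ρ {x : EuclideanSpace ℝ (Fin n) | ψ x ≤ 0},
      ∃ K : NNReal, ∃ s ∈ nhdsWithin x (Metric.thickening ρ {x : EuclideanSpace ℝ (Fin n) | ψ x ≤ 0}),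
        LipschitzOnWith K ψ' s)
    -- (A2.2)
    (hgrad : ∀ x, ψ x = 0 → 2 * η < ‖ψ' x‖)
    -- (A2.3): coercivity
    (hcoer : ∀ Mc : ℝ, ∃ R : ℝ, ∀ x : EuclideanSpace ℝ (Fin n), R ≤ ‖x‖ → Mc ≤ ψ x)
    -- (A2.4): connected interior
    (hconn : IsConnected (interior {x : EuclideanSpace ℝ (Fin n) | ψ x ≤ 0}))
    -- (A1): the control sets and the Lipschitz, bounded dynamics f
    (U : ℝ → Set (EuclideanSpace ℝ (Fin m)))
    (f : EuclideanSpace ℝ (Fin n) → EuclideanSpace ℝ (Fin m) → EuclideanSpace ℝ (Fin n))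
    (M ρt : ℝ) (hρt : 0 < ρt)
    (hflip : LipschitzOnWith (Real.toNNReal M)
      (fun p : (EuclideanSpace ℝ (Fin n)) × (EuclideanSpace ℝ (Fin m)) => f p.1 p.2)
      ({x : EuclideanSpace ℝ (Fin n) | ψ x ≤ 0} ×ˢ
        Metric.cthickening ρt (⋃ t ∈ Set.Icc (0:ℝ) 1, U t)))
    (hfbd : ∀ x, ψ x ≤ 0 → ∀ v ∈ Metric.cthickening ρt (⋃ t ∈ Set.Icc (0:ℝ) 1, U t),
      ‖f x v‖ ≤ M)
    -- (A3) and the C¹ bounded Lipschitz extension Φ of φ, with gradient Φ'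
    (φ Φ : EuclideanSpace ℝ (Fin n) → ℝ)
    (Φ' : EuclideanSpace ℝ (Fin n) → EuclideanSpace ℝ (Fin n)) (K : ℝ)
    (hφlip : ∃ Lφ : NNReal, LipschitzOnWith Lφ φ {x : EuclideanSpace ℝ (Fin n) | ψ x ≤ 0})
    (hφd : ∀ x ∈ interior {x : EuclideanSpace ℝ (Fin n) | ψ x ≤ 0}, HasGradientAt φ (Φ' x) x)
    (hΦext : ∀ x, ψ x ≤ 0 → Φ x = φ x)
    (hΦd : ∀ x, HasGradientAt Φ (Φ' x) x)
    (hΦbd : ∀ x, |Φ x| ≤ K) (hΦ'bd : ∀ x, ‖Φ' x‖ ≤ K)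
    (hΦlip : LipschitzWith (Real.toNNReal K) Φ)
    (hΦ'lip : LipschitzWith (Real.toNNReal K) Φ')
    (Mb : ℝ) (hMbdef : Mb = M + K)
    -- the penalty parameters
    (γ : ℕ → ℝ) (hγlb : ∀ k, 2 * Mb / η < γ k) (hγtop : Tendsto γ atTop atTop)
    -- the initial set C₀ ⊆ C
    (C₀ : Set (EuclideanSpace ℝ (Fin n)))
    (hC₀ : C₀ ⊆ {x : EuclideanSpace ℝ (Fin n) | ψ x ≤ 0})
    -- the data: u ∈ 𝒰, x absolutely continuous, x(0) ∈ C₀, x(t) ∈ C for all t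
    (u : ℝ → EuclideanSpace ℝ (Fin m)) (hu : ctrlMeas U u)
    (x x' : ℝ → EuclideanSpace ℝ (Fin n)) (hx : ACOn x x')
    (hx0 : x 0 ∈ C₀) (hxC : ∀ t ∈ Set.Icc (0:ℝ) 1, ψ (x t) ≤ 0) :
    (solD ψ f Φ' u x x' ↔ ∃ ξ : ℝ → ℝ, multP ψ ψ' f Φ' u x x' ξ) ∧
    ∀ ξ : ℝ → ℝ, multP ψ ψ' f Φ' u x x' ξ →
      -- uniqueness
      (∀ ξ₂ : ℝ → ℝ, multP ψ ψ' f Φ' u x x' ξ₂ →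
        ∀ᵐ t ∂(volume.restrict (Set.Icc (0:ℝ) 1)), ξ t = ξ₂ t) ∧
      -- ξ ∈ L^∞ with ‖ξ‖_∞ ≤ M̄/(2η)
      (∀ᵐ t ∂(volume.restrict (Set.Icc (0:ℝ) 1)), |ξ t| ≤ Mb / (2 * η)) ∧
      -- vanishing off the boundary, and the explicit formula on I⁰(x)
      (∀ t ∈ Set.Icc (0:ℝ) 1,
        x t ∉ frontier {y : EuclideanSpace ℝ (Fin n) | ψ y ≤ 0} → ξ t = 0) ∧
      (∀ᵐ t ∂(volume.restrict (Set.Icc (0:ℝ) 1)),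
        x t ∈ frontier {y : EuclideanSpace ℝ (Fin n) | ψ y ≤ 0} →
          ξ t = ‖x' t - (f (x t) (u t) - Φ' (x t))‖ / ‖ψ' (x t)‖ ∧
          ξ t ≤ Mb / (2 * η)) := by
  classical
  set μ : Measure ℝ := volume.restrict (Set.Icc (0:ℝ) 1) with hμdef
  set C : Set (EuclideanSpace ℝ (Fin n)) := {y | ψ y ≤ 0} with hCdef
  set V : Set (EuclideanSpace ℝ (Fin n)) := Metric.thickening ρ C with hVdef
  have hVopen : IsOpen V := Metric.isOpen_thickening
  have hCV : C ⊆ V := Metric.self_subset_thickening hρ C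
  have hnz : ∀ y, ψ y = 0 → ψ' y ≠ 0 := by
    intro y hy h
    have := hgrad y hy
    rw [h, norm_zero] at this
    linarith
  have hψcV : ∀ y ∈ V, ContinuousAt ψ y := fun y hy => (hψd y hy).hasFDerivAt.continuousAt
  have hfr0 : ∀ z, ψ z ≤ 0 → z ∈ frontier C → ψ z = 0 := by
    intro z hz hfz
    by_contra hne
    have hlt : ψ z < 0 := lt_of_le_of_ne hz hne
    have hin : z ∈ interior C := my_mem_interior_of_neg hVopen hψcV (hCV hz) hlt
    exact hfz.2 hin
  have hclarke_int : ∀ z, ψ z ≤ 0 → z ∉ frontier C → clarkeNC C z = {0} := by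
    intro z hz hfz
    apply my_clarkeNC_interior
    have h1 : z ∈ closure C := subset_closure hz
    by_contra h2
    exact hfz ⟨h1, h2⟩
  have hclarke_bd_sub : ∀ z, ψ z = 0 → clarkeNC C z ⊆ myray (ψ' z) := by
    intro z hz
    exact closure_minimal (convexHull_min
      (my_limNC_subset_ray hVopen hψd hψc hCV hnz hz) (my_convex_ray _)) (my_isClosed_ray _)
  have hray_sub_clarke : ∀ z, ψ z = 0 → myray (ψ' z) ⊆ clarkeNC C z := by
    intro z hz
    have hzV : z ∈ V := hCV (le_of_eq hz)
    obtain ⟨K', s, hsmem, hslip⟩ := hψloclip z hzV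
    have hsnhds : s ∈ 𝓝 z := by
      have := nhdsWithin_eq_nhds.2 (hVopen.mem_nhds hzV)
      rw [← this]
      exact hsmem
    obtain ⟨r, hr, hball⟩ := Metric.mem_nhds_iff.1 (inter_mem hsnhds (hVopen.mem_nhds hzV))
    have hsub := my_ray_subset_proxNC (ψ := ψ) (ψ' := ψ') hr
      (fun y hy => hψd y (hball hy).2) (hslip.mono (fun y hy => (hball hy).1)) hz
    exact fun ζ hζ => my_limNC_subset_clarkeNC C z
      (my_mem_limNC_of_proxNC (le_of_eq hz) (hsub hζ))
  -- absolutely continuous machinery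
  have hIcc : MeasurableSet (Set.Icc (0:ℝ) 1) := measurableSet_Icc
  have hIccInt : IntegrableOn x' (Set.Icc (0:ℝ) 1) volume := by
    have h1 : IntegrableOn x' (Set.Ioc (0:ℝ) 1) volume := hx.1.1
    rwa [integrableOn_Icc_iff_integrableOn_Ioc]
  set w : ℝ → EuclideanSpace ℝ (Fin n) := (Set.Icc (0:ℝ) 1).indicator x' with hwdef
  have hwInt : Integrable w volume := (integrable_indicator_iff hIcc).2 hIccInt
  set y : ℝ → EuclideanSpace ℝ (Fin n) := fun s => x 0 + ∫ σ in (0:ℝ)..s, w σ with hydef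
  have hycont : Continuous y := continuous_const.add (hwInt.continuous_primitive 0)
  have hyx : ∀ t ∈ Set.Icc (0:ℝ) 1, y t = x t := by
    intro t ht
    rw [hydef]
    simp only
    rw [hx.2 t ht]
    congr 1
    apply intervalIntegral.integral_congr
    intro σ hσ
    rw [uIcc_of_le ht.1] at hσ
    exact indicator_of_mem (mem_of_mem_of_subset hσ (Icc_subset_Icc le_rfl ht.2)) x'
  have hyC : ∀ t ∈ Set.Icc (0:ℝ) 1, ψ (y t) ≤ 0 := fun t ht => by
    rw [hyx t ht]; exact hxC t ht
  have hyder : ∀ᵐ t ∂μ, HasDerivAt y (x' t) t := by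
    have h1 := my_ae_hasDerivAt_primitive hwInt (x 0)
    have h2 : ∀ᵐ t ∂μ, HasDerivAt y (w t) t := ae_restrict_of_ae h1
    filter_upwards [h2, ae_restrict_mem hIcc] with t h3 h4
    rwa [hwdef, indicator_of_mem h4] at h3
  have hψyIcc : ContinuousOn (fun t => ψ (y t)) (Set.Icc (0:ℝ) 1) := by
    have hψV : ContinuousOn ψ V := fun z hz => (hψcV z hz).continuousWithinAt
    exact hψV.comp hycont.continuousOn (fun t ht => hCV (hyC t ht))
  set E : Set ℝ := Set.Icc (0:ℝ) 1 ∩ (fun t => ψ (y t)) ⁻¹' {0} with hEdef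
  have hEclosed : IsClosed E :=
    hψyIcc.preimage_isClosed_of_isClosed isClosed_Icc isClosed_singleton
  have hlevel0 := my_level_deriv_zero (F := fun t => ψ (y t)) hEclosed.measurableSet
    (fun t ht => ht.2)
  have hlevel : ∀ᵐ t ∂μ, t ∈ E → ∀ d, HasDerivAt (fun s => ψ (y s)) d t → d = 0 :=
    ae_restrict_of_ae (ae_imp_of_ae_restrict hlevel0)
  have hperp : ∀ᵐ t ∂μ, x t ∈ frontier C → ⟪ψ' (x t), x' t⟫ = 0 := by
    filter_upwards [hyder, hlevel, ae_restrict_mem hIcc] with t hdy hlev htI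
    intro hfr
    have hψ0 : ψ (x t) = 0 := hfr0 _ (hxC t htI) hfr
    have htE : t ∈ E := ⟨htI, by simp only [mem_preimage, mem_singleton_iff]; rw [hyx t htI]; exact hψ0⟩
    have hchain : HasDerivAt (fun s => ψ (y s)) ⟪ψ' (x t), x' t⟫ t := by
      have hgrad' : HasGradientAt ψ (ψ' (y t)) (y t) := hψd _ (hCV (hyC t htI))
      have hcomp := hgrad'.hasFDerivAt.comp_hasDerivAt t hdy
      have hval : (InnerProductSpace.toDual ℝ (EuclideanSpace ℝ (Fin n)) (ψ' (y t))) (x' t)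
          = ⟪ψ' (x t), x' t⟫ := by
        rw [InnerProductSpace.toDual_apply_apply, hyx t htI]
      rw [hval] at hcomp
      exact hcomp
    exact hlev htE _ hchain
  -- bounds on the data
  have hUsub : ∀ t ∈ Set.Icc (0:ℝ) 1, U t ⊆
      Metric.cthickening ρt (⋃ t ∈ Set.Icc (0:ℝ) 1, U t) := by
    intro t ht v hv
    exact Metric.self_subset_cthickening _ (mem_biUnion ht hv)
  have hμne : μ ≠ 0 := by
    intro h
    rw [hμdef, Measure.restrict_eq_zero] at h
    simp [Real.volume_Icc] at h
  have : (ae μ).NeBot := ae_neBot.2 hμne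
  obtain ⟨t₀, ht₀u, ht₀I⟩ := (hu.2.and (ae_restrict_mem hIcc)).exists
  have hM0 : 0 ≤ M := le_trans (norm_nonneg _)
    (hfbd (x t₀) (hxC _ ht₀I) (u t₀) (hUsub _ ht₀I ht₀u))
  have hK0 : 0 ≤ K := le_trans (abs_nonneg _) (hΦbd 0)
  have hMb0 : 0 ≤ Mb := by rw [hMbdef]; linarith
  have hfΦbd : ∀ᵐ t ∂μ, ‖f (x t) (u t) - Φ' (x t)‖ ≤ Mb := by
    filter_upwards [hu.2, ae_restrict_mem hIcc] with t h1 h2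
    calc ‖f (x t) (u t) - Φ' (x t)‖ ≤ ‖f (x t) (u t)‖ + ‖Φ' (x t)‖ := norm_sub_le _ _
      _ ≤ M + K := add_le_add (hfbd _ (hxC t h2) _ (hUsub t h2 h1)) (hΦ'bd _)
      _ = Mb := hMbdef.symm
  -- the key bound/formula for any multiplier
  have hboundkey : ∀ ξ : ℝ → ℝ, multP ψ ψ' f Φ' u x x' ξ →
      ∀ᵐ t ∂μ, x t ∈ frontier C →
        ξ t = ‖x' t - (f (x t) (u t) - Φ' (x t))‖ / ‖ψ' (x t)‖ ∧ ξ t ≤ Mb / (2 * η) := by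
    intro ξ hξ
    filter_upwards [hξ.2.2.2, hperp, hfΦbd, ae_restrict_mem hIcc] with t heq hp hfb htI
    intro hfr
    have hψ0 : ψ (x t) = 0 := hfr0 _ (hxC t htI) hfr
    have hgn : 2 * η < ‖ψ' (x t)‖ := hgrad _ hψ0
    have hgpos : 0 < ‖ψ' (x t)‖ := by linarith
    have hξnn : 0 ≤ ξ t := hξ.2.1 t htI
    have hdiff : x' t - (f (x t) (u t) - Φ' (x t)) = -(ξ t • ψ' (x t)) := by
      rw [heq]; abel
    have hnorm : ‖x' t - (f (x t) (u t) - Φ' (x t))‖ = ξ t * ‖ψ' (x t)‖ := by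
      rw [hdiff, norm_neg, norm_smul, Real.norm_eq_abs, abs_of_nonneg hξnn]
    constructor
    · rw [hnorm, mul_div_assoc, div_self (ne_of_gt hgpos), mul_one]
    · have hperp0 : ⟪ψ' (x t), x' t⟫ = 0 := hp hfr
      have hinner : ⟪ψ' (x t), x' t⟫
          = ⟪ψ' (x t), f (x t) (u t) - Φ' (x t)⟫ - ξ t * ‖ψ' (x t)‖ ^ 2 := by
        rw [heq, inner_sub_right, real_inner_smul_right, real_inner_self_eq_norm_sq]
      have hinle : ⟪ψ' (x t), f (x t) (u t) - Φ' (x t)⟫ ≤ ‖ψ' (x t)‖ * Mb :=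
        le_trans (real_inner_le_norm _ _) (mul_le_mul_of_nonneg_left hfb (norm_nonneg _))
      have h6 : ξ t * ‖ψ' (x t)‖ ^ 2 ≤ ‖ψ' (x t)‖ * Mb := by
        rw [hperp0] at hinner; linarith
      have h5 : ξ t * ‖ψ' (x t)‖ ≤ Mb := by nlinarith
      rw [le_div_iff₀ (by linarith : (0:ℝ) < 2 * η)]
      nlinarith
  -- multP → solD
  have hm2s : (∃ ξ : ℝ → ℝ, multP ψ ψ' f Φ' u x x' ξ) → solD ψ f Φ' u x x' := by
    rintro ⟨ξ, hξ⟩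
    refine ⟨hx, hxC, ?_⟩
    filter_upwards [hξ.2.2.2, ae_restrict_mem hIcc] with t heq htI
    by_cases hfr : x t ∈ frontier C
    · have hψ0 := hfr0 _ (hxC t htI) hfr
      apply hray_sub_clarke _ hψ0
      refine ⟨ξ t, hξ.2.1 t htI, ?_⟩
      rw [heq]; abel
    · have h0 : ξ t = 0 := hξ.2.2.1 t htI hfr
      rw [heq, h0, zero_smul, sub_zero, sub_self]
      exact my_zero_mem_clarkeNC (hxC t htI)
  -- solD → ∃ ξ
  have hs2m : solD ψ f Φ' u x x' → ∃ ξ : ℝ → ℝ, multP ψ ψ' f Φ' u x x' ξ := by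
    intro hsol
    obtain ⟨G0, hG0meas, hG0eq⟩ : ∃ g : ℝ → EuclideanSpace ℝ (Fin n),
        StronglyMeasurable g ∧ x' =ᵐ[μ] g := by
      have heqm : volume.restrict (Set.Ioc (0:ℝ) 1) = μ := by
        rw [hμdef]; exact Measure.restrict_congr_set Ioc_ae_eq_Icc
      have h1 : AEStronglyMeasurable x' μ := by
        rw [← heqm]; exact hx.1.1.aestronglyMeasurable
      exact ⟨h1.mk x', h1.stronglyMeasurable_mk, h1.ae_eq_mk⟩
    obtain ⟨F, hFcont, hFeq⟩ := my_lipschitz_extend hflip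
    set θ : ℝ → ℝ := fun t => max 0 (min 1 t) with hθdef
    have hθcont : Continuous θ := continuous_const.max (continuous_const.min continuous_id)
    have hθmem : ∀ t, θ t ∈ Set.Icc (0:ℝ) 1 :=
      fun t => ⟨le_max_left _ _, max_le (by norm_num) (min_le_left _ _)⟩
    have hθid : ∀ t ∈ Set.Icc (0:ℝ) 1, θ t = t := by
      intro t ht
      rw [hθdef]
      simp only
      rw [min_eq_right ht.2, max_eq_right ht.1]
    set z : ℝ → EuclideanSpace ℝ (Fin n) := fun t => y (θ t) with hzdef
    have hzcont : Continuous z := hycont.comp hθcont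
    have hzC : ∀ t, ψ (z t) ≤ 0 := fun t => hyC _ (hθmem t)
    have hzx : ∀ t ∈ Set.Icc (0:ℝ) 1, z t = x t := by
      intro t ht
      rw [hzdef]
      simp only
      rw [hθid t ht]
      exact hyx t ht
    have hψ'z : Continuous fun t => ψ' (z t) :=
      hψc.comp_continuous hzcont (fun t => hCV (hzC t))
    set A : Set ℝ := Set.Icc (0:ℝ) 1 ∩ z ⁻¹' (frontier C) with hAdef
    have hAmeas : MeasurableSet A :=
      (isClosed_Icc.inter (isClosed_frontier.preimage hzcont)).measurableSet
    set G : ℝ → ℝ := fun t =>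
      max 0 (⟪ψ' (z t), F (z t, u t) - Φ' (z t) - G0 t⟫ / ‖ψ' (z t)‖ ^ 2) with hGdef
    have hGmeas : Measurable G := by
      apply Measurable.max measurable_const
      apply Measurable.div
      · apply Measurable.inner hψ'z.measurable
        exact ((hFcont.measurable.comp (hzcont.measurable.prodMk hu.1)).sub
          (hΦ'lip.continuous.measurable.comp hzcont.measurable)).sub hG0meas.measurable
      · exact (hψ'z.norm.pow 2).measurable
    refine ⟨A.indicator G, hGmeas.indicator hAmeas, ?_, ?_, ?_⟩
    · intro t _
      apply indicator_nonneg
      intro s _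
      exact le_max_left _ _
    · intro t htI hfr
      apply indicator_of_notMem
      intro htA
      exact hfr (by rw [← hzx t htI]; exact htA.2)
    · filter_upwards [hsol.2.2, hG0eq, hu.2, ae_restrict_mem hIcc] with t hcl hg0 huU htI
      by_cases hfr : x t ∈ frontier C
      · have hψ0 := hfr0 _ (hxC t htI) hfr
        obtain ⟨l, hl, hleq⟩ := hclarke_bd_sub _ hψ0 hcl
        have htA : t ∈ A := ⟨htI, by rw [mem_preimage, hzx t htI]; exact hfr⟩
        have hFval : F (z t, u t) = f (x t) (u t) := by
          rw [hzx t htI]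
          have hmemS : ((x t, u t) : EuclideanSpace ℝ (Fin n) × EuclideanSpace ℝ (Fin m)) ∈
              C ×ˢ Metric.cthickening ρt (⋃ t ∈ Set.Icc (0:ℝ) 1, U t) :=
            Set.mem_prod.2 ⟨hxC t htI, hUsub t htI huU⟩
          exact (hFeq hmemS).symm
        have hval : ⟪ψ' (z t), F (z t, u t) - Φ' (z t) - G0 t⟫ / ‖ψ' (z t)‖ ^ 2 = l := by
          rw [hzx t htI] at hFval ⊢
          rw [hFval, ← hg0]
          rw [show f (x t) (u t) - Φ' (x t) - x' t = l • ψ' (x t) from hleq]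
          rw [real_inner_smul_right, real_inner_self_eq_norm_sq, mul_div_assoc,
            div_self (pow_ne_zero 2 (norm_ne_zero_iff.2 (hnz _ hψ0))), mul_one]
        have hind : A.indicator G t = l := by
          rw [indicator_of_mem htA, hGdef]
          simp only
          rw [hval, max_eq_right hl]
        rw [hind, ← hleq]
        abel
      · have hint : clarkeNC C (x t) = {0} := hclarke_int _ (hxC t htI) hfr
        rw [hint] at hcl
        have h0 : f (x t) (u t) - Φ' (x t) - x' t = 0 := hcl
        have hA0 : A.indicator G t = 0 :=
          indicator_of_notMem (fun htA => hfr (by rw [← hzx t htI]; exact htA.2)) G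
        rw [hA0, zero_smul, sub_zero]
        exact (sub_eq_zero.1 h0).symm
  constructor
  · exact ⟨hs2m, hm2s⟩
  · intro ξ hξ
    refine ⟨?_, ?_, hξ.2.2.1, hboundkey ξ hξ⟩
    · intro ξ₂ hξ₂
      filter_upwards [hξ.2.2.2, hξ₂.2.2.2, ae_restrict_mem hIcc] with t e1 e2 htI
      by_cases hfr : x t ∈ frontier C
      · have hψ0 := hfr0 _ (hxC t htI) hfr
        have hgne : ψ' (x t) ≠ 0 := hnz _ hψ0
        have hsm : ξ t • ψ' (x t) = ξ₂ t • ψ' (x t) := by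
          have h3 : f (x t) (u t) - Φ' (x t) - ξ t • ψ' (x t)
              = f (x t) (u t) - Φ' (x t) - ξ₂ t • ψ' (x t) := by rw [← e1, ← e2]
          exact sub_right_inj.1 h3
        exact smul_left_injective ℝ hgne hsm
      · rw [hξ.2.2.1 t htI hfr, hξ₂.2.2.1 t htI hfr]
    · filter_upwards [hboundkey ξ hξ, ae_restrict_mem hIcc] with t hb htI
      by_cases hfr : x t ∈ frontier C
      · rw [abs_of_nonneg (hξ.2.1 t htI)]
        exact (hb hfr).2
      · rw [hξ.2.2.1 t htI hfr, abs_zero]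
        positivity
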